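/- Let n ≥ 2 and 0 ≤ i ≤ n − 1. Let α ∈ P_i and β, γ ∈ P_{i+1} be such that |α ∩ β| = |(α ⊖ 2) ∩ β| = n − 1 and |(α ⊖ 2) ∩ γ| = |(α ⊖ 4) ∩ γ| = n − 1. Then γ = β ⊖ 2. -/
import Mathlib


/-!
Common definitions: stable n-sets in `ZMod (2*n+2)`, tight/loose sets, shifts,
outer neighbors, parity, the sets `P_i`, and adjacency in the stable Kneser
graph `SG_{n,2}` (two stable n-sets are adjacent iff they are disjoint).
-/

instance (n : ℕ) : NeZero (2 * n + 2) := ⟨by omega⟩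

/-- A stable n-set: a finite subset of `ZMod (2n+2)` of cardinality `n`
containing no two (cyclically) consecutive elements. -/
def IsStable (n : ℕ) (α : Finset (ZMod (2 * n + 2))) : Prop :=
  α.card = n ∧ ∀ i : ZMod (2 * n + 2), ¬(i ∈ α ∧ i + 1 ∈ α)

/-- A set is tight if it has the form `{i, i+2, i+4, …, i+2(n-1)}`. -/
def IsTight (n : ℕ) (α : Finset (ZMod (2 * n + 2))) : Prop :=
  ∃ i : ZMod (2 * n + 2), α = (Finset.range n).image (fun k : ℕ => i + 2 * (k : ZMod (2 * n + 2)))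

/-- `α ⊕ j`, the shift of `α` by `j`. -/
def oplus (n : ℕ) (α : Finset (ZMod (2 * n + 2))) (j : ZMod (2 * n + 2)) :
    Finset (ZMod (2 * n + 2)) :=
  α.image (fun a => a + j)

/-- `α ⊖ j`, the shift of `α` by `-j`. -/
def ominus (n : ℕ) (α : Finset (ZMod (2 * n + 2))) (j : ZMod (2 * n + 2)) :
    Finset (ZMod (2 * n + 2)) :=
  α.image (fun a => a - j)

/-- `β` is an outer neighbor of `α`: they are disjoint and
`β = ((α \ {a}) ⊕ 1) ∪ {a + 2}` for some `a ∈ α`. -/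
def OuterNbr (n : ℕ) (α β : Finset (ZMod (2 * n + 2))) : Prop :=
  Disjoint α β ∧ ∃ a ∈ α, β = oplus n (α.erase a) 1 ∪ {a + 2}

/-- The parity of an element of `ZMod (2n+2)`: its image in `ZMod 2` under the
natural ring homomorphism. -/
def parity (n : ℕ) (a : ZMod (2 * n + 2)) : ZMod 2 :=
  ZMod.castHom (show (2 : ℕ) ∣ 2 * n + 2 from ⟨n + 1, by ring⟩) (ZMod 2) a

/-- Adjacency in the stable Kneser graph `SG_{n,2}`: two distinct stable n-sets
are adjacent iff they are disjoint. -/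
def SGAdj (n : ℕ) (α β : Finset (ZMod (2 * n + 2))) : Prop :=
  IsStable n α ∧ IsStable n β ∧ α ≠ β ∧ Disjoint α β

/-- `P_i`: stable n-sets with exactly `i` even elements and `n - i` odd elements. -/
def Pset (n i : ℕ) : Set (Finset (ZMod (2 * n + 2))) :=
  {α | IsStable n α ∧ (α.filter fun a => parity n a = 0).card = i ∧
       (α.filter fun a => parity n a = 1).card = n - i}
section AuxLemmas

lemma parity_add' (n : ℕ) (x y : ZMod (2 * n + 2)) :
    parity n (x + y) = parity n x + parity n y := map_add _ x y

lemma parity_sub' (n : ℕ) (x y : ZMod (2 * n + 2)) :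
    parity n (x - y) = parity n x - parity n y := map_sub _ x y

lemma parity_one' (n : ℕ) : parity n 1 = 1 := map_one _

lemma parity_two' (n : ℕ) : parity n 2 = 0 := by
  have h : (2 : ZMod (2 * n + 2)) = 1 + 1 := by norm_num
  rw [h, parity_add', parity_one']
  decide

lemma zmod2_cases (v : ZMod 2) : v = 0 ∨ v = 1 := by revert v; decide

lemma parity_add_two (n : ℕ) (x : ZMod (2 * n + 2)) : parity n (x + 2) = parity n x := by
  rw [parity_add', parity_two', add_zero]

lemma two_ne' (n : ℕ) (hn : 1 ≤ n) : (2 : ZMod (2 * n + 2)) ≠ 0 := by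
  intro h
  have h2 : ((2 : ℕ) : ZMod (2 * n + 2)) = 0 := by exact_mod_cast h
  rw [ZMod.natCast_eq_zero_iff] at h2
  have := Nat.le_of_dvd (by norm_num) h2
  omega

lemma four_ne' (n : ℕ) (hn : 2 ≤ n) : (4 : ZMod (2 * n + 2)) ≠ 0 := by
  intro h
  have h2 : ((4 : ℕ) : ZMod (2 * n + 2)) = 0 := by exact_mod_cast h
  rw [ZMod.natCast_eq_zero_iff] at h2
  have := Nat.le_of_dvd (by norm_num) h2
  omega

/-- A subset of `ZMod (2n+2)` of size at most `n` closed under adding 2 is empty. -/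
lemma coset_empty (n : ℕ) (S : Finset (ZMod (2 * n + 2)))
    (hcl : ∀ x ∈ S, x + 2 ∈ S) (hcard : S.card ≤ n) : S = ∅ := by
  by_contra h
  obtain ⟨x, hx⟩ := Finset.nonempty_iff_ne_empty.mpr h
  have hmem : ∀ k : ℕ, x + 2 * (k : ZMod (2 * n + 2)) ∈ S := by
    intro k
    induction k with
    | zero => simpa using hx
    | succ k ih =>
      have h2 := hcl _ ih
      have e : x + 2 * ((k + 1 : ℕ) : ZMod (2 * n + 2)) = (x + 2 * (k : ℕ)) + 2 := by
        push_cast; ring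
      rw [e]; exact h2
  have hinj : Set.InjOn (fun k : ℕ => x + 2 * (k : ZMod (2 * n + 2)))
      (Finset.range (n + 1)) := by
    intro k1 h1 k2 h2 he
    simp only [Finset.coe_range, Set.mem_Iio] at h1 h2
    have hc : ((2 * k1 : ℕ) : ZMod (2 * n + 2)) = ((2 * k2 : ℕ) : ZMod (2 * n + 2)) := by
      have := add_left_cancel he
      push_cast
      exact this
    have hv := congrArg ZMod.val hc
    rw [ZMod.val_natCast_of_lt (by omega), ZMod.val_natCast_of_lt (by omega)] at hv
    omega
  have hle := Finset.card_le_card_of_injOn _ (fun k _ => hmem k) hinj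
  rw [Finset.card_range] at hle
  omega

/-- There are `n+1` odd elements in `ZMod (2n+2)`. -/
lemma card_odds (n : ℕ) :
    (Finset.univ.filter (fun a : ZMod (2 * n + 2) => parity n a = 1)).card = n + 1 := by
  classical
  have hbij : (Finset.univ.filter (fun a : ZMod (2 * n + 2) => parity n a = 0)).card
      = (Finset.univ.filter (fun a : ZMod (2 * n + 2) => parity n a = 1)).card := by
    apply Finset.card_bij (fun a _ => a + 1)
    · intro a ha
      simp only [Finset.mem_filter, Finset.mem_univ, true_and] at ha ⊢
      rw [parity_add', ha, parity_one', zero_add]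
    · intro a _ b _ he; exact add_right_cancel he
    · intro b hb
      simp only [Finset.mem_filter, Finset.mem_univ, true_and] at hb
      refine ⟨b - 1, ?_, by ring⟩
      simp only [Finset.mem_filter, Finset.mem_univ, true_and]
      rw [parity_sub', hb, parity_one', sub_self]
  have htot : (Finset.univ.filter (fun a : ZMod (2 * n + 2) => parity n a = 0)).card
      + (Finset.univ.filter (fun a : ZMod (2 * n + 2) => parity n a = 1)).card
      = 2 * n + 2 := by
    have hsplit := Finset.card_filter_add_card_filter_not
      (s := (Finset.univ : Finset (ZMod (2 * n + 2))))
      (p := fun a => parity n a = 0)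
    have hneg : Finset.univ.filter (fun a : ZMod (2 * n + 2) => ¬ parity n a = 0)
        = Finset.univ.filter (fun a : ZMod (2 * n + 2) => parity n a = 1) := by
      apply Finset.filter_congr
      intro a _
      rcases zmod2_cases (parity n a) with h | h <;> simp [h]
    rw [hneg] at hsplit
    rw [hsplit]
    simp [ZMod.card]
  omega

lemma mem_ominus' (n : ℕ) (α : Finset (ZMod (2 * n + 2))) (j x : ZMod (2 * n + 2)) :
    x ∈ ominus n α j ↔ x + j ∈ α := by
  simp only [ominus, Finset.mem_image]
  constructor
  · rintro ⟨a, ha, rfl⟩; simpa using ha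
  · intro h; exact ⟨x + j, h, by ring⟩

lemma ominus_inj (n : ℕ) (j : ZMod (2 * n + 2)) :
    Function.Injective (fun a : ZMod (2 * n + 2) => a - j) := by
  intro a b h
  have := congrArg (· + j) h
  simpa using this

lemma ominus_card' (n : ℕ) (α : Finset (ZMod (2 * n + 2))) (j : ZMod (2 * n + 2)) :
    (ominus n α j).card = α.card :=
  Finset.card_image_of_injective _ (ominus_inj n j)

lemma ominus_inter' (n : ℕ) (s t : Finset (ZMod (2 * n + 2))) (j : ZMod (2 * n + 2)) :
    ominus n (s ∩ t) j = ominus n s j ∩ ominus n t j :=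
  Finset.image_inter s t (ominus_inj n j)

lemma ominus_ominus' (n : ℕ) (α : Finset (ZMod (2 * n + 2))) :
    ominus n (ominus n α 2) 2 = ominus n α 4 := by
  simp only [ominus, Finset.image_image]
  apply Finset.image_congr
  intro x _
  show x - 2 - 2 = x - 4
  ring

lemma ominus_two_mem_Pset (n i : ℕ) (α : Finset (ZMod (2 * n + 2)))
    (hα : α ∈ Pset n i) : ominus n α 2 ∈ Pset n i := by
  obtain ⟨⟨hcard, hstab⟩, h0, h1⟩ := hα
  have hf : ∀ v : ZMod 2, (ominus n α 2).filter (fun a => parity n a = v)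
      = ominus n (α.filter (fun a => parity n a = v)) 2 := by
    intro v
    ext x
    simp only [Finset.mem_filter, mem_ominus' ]
    constructor
    · rintro ⟨h, hp⟩; exact ⟨h, by rw [parity_add_two]; exact hp⟩
    · rintro ⟨h, hp⟩; rw [parity_add_two] at hp; exact ⟨h, hp⟩
  refine ⟨⟨?_, ?_⟩, ?_, ?_⟩
  · rw [ominus_card']; exact hcard
  · rintro x ⟨hx, hx1⟩
    rw [mem_ominus'] at hx hx1
    exact hstab (x + 2) ⟨hx, by rwa [show x + 1 + 2 = (x + 2) + 1 by ring] at hx1⟩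
  · rw [hf 0, ominus_card']; exact h0
  · rw [hf 1, ominus_card']; exact h1

lemma swap_extract (n : ℕ) (X Y : Finset (ZMod (2 * n + 2))) (hn : 1 ≤ n)
    (hX : X.card = n) (hY : Y.card = n) (hXY : (X ∩ Y).card = n - 1) :
    ∃ a b, a ∈ X ∧ a ∉ Y ∧ b ∈ Y ∧ b ∉ X ∧ Y = insert b (X.erase a) := by
  classical
  have h1 : (X \ (X ∩ Y)).card = 1 := by
    rw [Finset.card_sdiff_of_subset Finset.inter_subset_left, hX, hXY]; omega
  obtain ⟨a, ha⟩ := Finset.card_eq_one.mp h1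
  have h2 : (Y \ (X ∩ Y)).card = 1 := by
    rw [Finset.card_sdiff_of_subset Finset.inter_subset_right, hY, hXY]; omega
  obtain ⟨b, hb⟩ := Finset.card_eq_one.mp h2
  have hamem : a ∈ X \ (X ∩ Y) := ha ▸ Finset.mem_singleton_self a
  have hbmem : b ∈ Y \ (X ∩ Y) := hb ▸ Finset.mem_singleton_self b
  have haX : a ∈ X := (Finset.mem_sdiff.mp hamem).1
  have haY : a ∉ Y := fun hy =>
    (Finset.mem_sdiff.mp hamem).2 (Finset.mem_inter.mpr ⟨haX, hy⟩)
  have hbY : b ∈ Y := (Finset.mem_sdiff.mp hbmem).1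
  have hbX : b ∉ X := fun hx =>
    (Finset.mem_sdiff.mp hbmem).2 (Finset.mem_inter.mpr ⟨hx, hbY⟩)
  refine ⟨a, b, haX, haY, hbY, hbX, ?_⟩
  ext x
  simp only [Finset.mem_insert, Finset.mem_erase]
  constructor
  · intro hx
    by_cases hxb : x = b
    · exact Or.inl hxb
    · right
      have hnot : x ∉ Y \ (X ∩ Y) := by rw [hb]; simpa
      have hxin : x ∈ X ∩ Y := by
        by_contra hc; exact hnot (Finset.mem_sdiff.mpr ⟨hx, hc⟩)
      refine ⟨?_, (Finset.mem_inter.mp hxin).1⟩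
      rintro rfl; exact haY hx
  · rintro (rfl | ⟨hxa, hxX⟩)
    · exact hbY
    · have hnot : x ∉ X \ (X ∩ Y) := by rw [ha]; simpa
      have hxin : x ∈ X ∩ Y := by
        by_contra hc; exact hnot (Finset.mem_sdiff.mpr ⟨hxX, hc⟩)
      exact (Finset.mem_inter.mp hxin).2

lemma swap_parity (n i : ℕ) (α : Finset (ZMod (2 * n + 2))) (a b : ZMod (2 * n + 2))
    (h0α : (α.filter fun x => parity n x = 0).card = i)
    (h0β : ((insert b (α.erase a)).filter fun x => parity n x = 0).card = i + 1)
    (haα : a ∈ α) (hbα : b ∉ α) :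
    parity n a = 1 ∧ parity n b = 0 := by
  classical
  have hbnm : b ∉ (α.filter fun x => parity n x = 0).erase a := by
    intro h
    exact hbα (Finset.mem_filter.mp (Finset.mem_of_mem_erase h)).1
  have hkey : ((insert b (α.erase a)).filter fun x => parity n x = 0)
      = if parity n b = 0 then insert b ((α.filter fun x => parity n x = 0).erase a)
        else (α.filter fun x => parity n x = 0).erase a := by
    rw [Finset.filter_insert, Finset.filter_erase]
  rcases zmod2_cases (parity n a) with hpa | hpa <;>
    rcases zmod2_cases (parity n b) with hpb | hpb
  · -- pa = 0, pb = 0 : card = (i-1)+1 = i ≠ i+1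
    exfalso
    have hain : a ∈ α.filter fun x => parity n x = 0 := Finset.mem_filter.mpr ⟨haα, hpa⟩
    have : ((insert b (α.erase a)).filter fun x => parity n x = 0).card = i - 1 + 1 := by
      rw [hkey, if_pos hpb, Finset.card_insert_of_notMem hbnm,
        Finset.card_erase_of_mem hain, h0α]
    have hipos : 1 ≤ i := by
      rw [← h0α]; exact Finset.card_pos.mpr ⟨a, hain⟩
    omega
  · -- pa = 0, pb = 1 : card = i-1 ≠ i+1
    exfalso
    have hain : a ∈ α.filter fun x => parity n x = 0 := Finset.mem_filter.mpr ⟨haα, hpa⟩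
    have : ((insert b (α.erase a)).filter fun x => parity n x = 0).card = i - 1 := by
      rw [hkey, if_neg (by rw [hpb]; decide), Finset.card_erase_of_mem hain, h0α]
    omega
  · -- pa = 1, pb = 0 : good
    exact ⟨hpa, hpb⟩
  · -- pa = 1, pb = 1 : card = i ≠ i+1
    exfalso
    have hanin : a ∉ α.filter fun x => parity n x = 0 := by
      intro h
      have := (Finset.mem_filter.mp h).2
      rw [hpa] at this; exact absurd this (by decide)
    have : ((insert b (α.erase a)).filter fun x => parity n x = 0).card = i := by
      rw [hkey, if_neg (by rw [hpb]; decide), Finset.erase_eq_of_notMem hanin, h0α]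
    omega

end AuxLemmas

lemma shape (n i : ℕ) (hn : 2 ≤ n) (hi : i ≤ n - 1)
    (α β : Finset (ZMod (2 * n + 2)))
    (hα : α ∈ Pset n i) (hβ : β ∈ Pset n (i + 1))
    (h1 : (α ∩ β).card = n - 1)
    (h2 : ((ominus n α 2) ∩ β).card = n - 1) :
    ∃ a b, parity n a = 1 ∧ parity n b = 0 ∧ β = insert b (α.erase a) ∧
      ((∃ c d, parity n c = 1 ∧ parity n d = 0 ∧
          α \ (ominus n α 2) = {a, d} ∧ (ominus n α 2) \ α = {c, b})
       ∨ (∃ c, α \ (ominus n α 2) = {a} ∧ (ominus n α 2) \ α = {c} ∧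
          ((b = a + 1 ∧ c = a + 2) ∨ (b = a - 1 ∧ c = a - 2)))) := by
  classical
  set A := ominus n α 2 with hAdef
  obtain ⟨⟨hαcard, hαstab⟩, hα0, hα1⟩ := hα
  obtain ⟨⟨hβcard, hβstab⟩, hβ0, hβ1⟩ := hβ
  have hAP := ominus_two_mem_Pset n i α ⟨⟨hαcard, hαstab⟩, hα0, hα1⟩
  obtain ⟨⟨hAcard, _⟩, hA0, hA1⟩ := hAP
  have hmemA : ∀ x, x ∈ A ↔ x + 2 ∈ α := fun x => mem_ominus' n α 2 x
  obtain ⟨a, b, haα, haβ, hbβ, hbα, rep1⟩ :=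
    swap_extract n α β (by omega) hαcard hβcard h1
  obtain ⟨c, d, hcA, hcβ, hdβ, hdA, rep2⟩ :=
    swap_extract n A β (by omega) hAcard hβcard h2
  obtain ⟨pa, pb⟩ := swap_parity n i α a b hα0 (by rw [← rep1]; exact hβ0) haα hbα
  obtain ⟨pc, pd⟩ := swap_parity n i A c d hA0 (by rw [← rep2]; exact hβ0) hcA hdA
  have hmem1 : ∀ x, x ∈ β ↔ x = b ∨ (x ≠ a ∧ x ∈ α) := by
    intro x; rw [rep1]; simp [Finset.mem_insert, Finset.mem_erase]
  have hmem2 : ∀ x, x ∈ β ↔ x = d ∨ (x ≠ c ∧ x ∈ A) := by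
    intro x; rw [rep2]; simp [Finset.mem_insert, Finset.mem_erase]
  have haA_eq : a ∈ A → a = c := by
    intro h
    by_contra hne
    exact haβ ((hmem2 a).mpr (Or.inr ⟨hne, h⟩))
  have hcα_eq : c ∈ α → c = a := by
    intro h
    by_contra hne
    exact hcβ ((hmem1 c).mpr (Or.inr ⟨hne, h⟩))
  have hclosed : ∀ v : ZMod 2, (α.filter fun x => parity n x = v) ⊆ A →
      (α.filter fun x => parity n x = v) = ∅ := by
    intro v hsub
    refine coset_empty n _ ?_ ?_
    · intro x hx
      have hxα := Finset.mem_filter.mp hx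
      have hx2 : x + 2 ∈ α := (hmemA x).mp (hsub hx)
      exact Finset.mem_filter.mpr ⟨hx2, by rw [parity_add_two]; exact hxα.2⟩
    · calc (α.filter fun x => parity n x = v).card ≤ α.card :=
          Finset.card_filter_le _ _
        _ = n := hαcard
  by_cases hbd : b = d
  · -- Case (i) : b = d, i.e. the new element is common to both representations
    subst hbd
    have hac : a ≠ c := by
      intro h
      have hsub : α ∪ A ⊆ insert a (β.erase b) := by
        intro x hx
        rcases Finset.mem_union.mp hx with hxα | hxA
        · by_cases hxa : x = a
          · exact Finset.mem_insert.mpr (Or.inl hxa)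
          · have hxβ : x ∈ β := (hmem1 x).mpr (Or.inr ⟨hxa, hxα⟩)
            have hxb : x ≠ b := fun he => hbα (he ▸ hxα)
            exact Finset.mem_insert.mpr (Or.inr (Finset.mem_erase.mpr ⟨hxb, hxβ⟩))
        · by_cases hxc : x = c
          · exact Finset.mem_insert.mpr (Or.inl (by rw [hxc, ← h]))
          · have hxβ : x ∈ β := (hmem2 x).mpr (Or.inr ⟨hxc, hxA⟩)
            have hxb : x ≠ b := fun he => hdA (he ▸ hxA)
            exact Finset.mem_insert.mpr (Or.inr (Finset.mem_erase.mpr ⟨hxb, hxβ⟩))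
      have hcard1 : (α ∪ A).card ≤ n := by
        calc (α ∪ A).card ≤ (insert a (β.erase b)).card := Finset.card_le_card hsub
          _ ≤ (β.erase b).card + 1 := Finset.card_insert_le _ _
          _ = n - 1 + 1 := by rw [Finset.card_erase_of_mem hdβ, hβcard]
          _ ≤ n := by omega
      have hαeq : α = α ∪ A :=
        Finset.eq_of_subset_of_card_le Finset.subset_union_left
          (by rw [hαcard]; exact hcard1)
      have hAα : A ⊆ α := by
        rw [hαeq]; exact Finset.subset_union_right
      have hAeq : A = α :=
        Finset.eq_of_subset_of_card_le hAα (by rw [hαcard, hAcard])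
      have hemp : α = ∅ := by
        refine coset_empty n α ?_ (le_of_eq hαcard)
        intro x hx
        have hxA : x ∈ A := by rw [hAeq]; exact hx
        exact (hmemA x).mp hxA
      rw [hemp] at hαcard
      simp at hαcard
      omega
    have haA : a ∉ A := fun h => hac (haA_eq h)
    have hcα : c ∉ α := fun h => hac ((hcα_eq h).symm)
    have hs1 : α \ A = {a} := by
      ext x
      simp only [Finset.mem_sdiff, Finset.mem_singleton]
      constructor
      · rintro ⟨hxα, hxA⟩
        by_contra hxa
        have hxβ : x ∈ β := (hmem1 x).mpr (Or.inr ⟨hxa, hxα⟩)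
        rcases (hmem2 x).mp hxβ with h | ⟨_, h⟩
        · exact hbα (h ▸ hxα)
        · exact hxA h
      · rintro rfl; exact ⟨haα, haA⟩
    have hs2 : A \ α = {c} := by
      ext x
      simp only [Finset.mem_sdiff, Finset.mem_singleton]
      constructor
      · rintro ⟨hxA, hxα⟩
        by_contra hxc
        have hxβ : x ∈ β := (hmem2 x).mpr (Or.inr ⟨hxc, hxA⟩)
        rcases (hmem1 x).mp hxβ with h | ⟨_, h⟩
        · exact hdA (h ▸ hxA)
        · exact hxα h
      · rintro rfl; exact ⟨hcA, hcα⟩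
    -- evens of α are contained in A, so i = 0 and all elements are odd
    have hOsub : (α.filter fun x => parity n x = 0) ⊆ A := by
      have hsub1 : ((α ∪ A).filter fun x => parity n x = 0)
          ⊆ (β.filter fun x => parity n x = 0) := by
        intro x hx
        obtain ⟨hxu, hxp⟩ := Finset.mem_filter.mp hx
        have hxa : x ≠ a := fun he => by
          rw [he, pa] at hxp; exact absurd hxp (by decide)
        have hxc : x ≠ c := fun he => by
          rw [he, pc] at hxp; exact absurd hxp (by decide)
        rcases Finset.mem_union.mp hxu with h | h
        · exact Finset.mem_filter.mpr ⟨(hmem1 x).mpr (Or.inr ⟨hxa, h⟩), hxp⟩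
        · exact Finset.mem_filter.mpr ⟨(hmem2 x).mpr (Or.inr ⟨hxc, h⟩), hxp⟩
      have hbu : b ∉ α ∪ A := by
        simp only [Finset.mem_union]
        rintro (h | h)
        exacts [hbα h, hdA h]
      have hins : insert b ((α ∪ A).filter fun x => parity n x = 0)
          ⊆ (β.filter fun x => parity n x = 0) := by
        intro x hx
        rcases Finset.mem_insert.mp hx with rfl | hx
        · exact Finset.mem_filter.mpr ⟨hdβ, pb⟩
        · exact hsub1 hx
      have hcard2 := Finset.card_le_card hins
      rw [Finset.card_insert_of_notMem
        (fun h => hbu (Finset.filter_subset _ _ h)), hβ0] at hcard2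
      have hie := Finset.card_union_add_card_inter
        (α.filter fun x => parity n x = 0) (A.filter fun x => parity n x = 0)
      rw [← Finset.filter_union, hα0, hA0] at hie
      have hle2 : ((α.filter fun x => parity n x = 0)
          ∩ (A.filter fun x => parity n x = 0)).card ≤ i := by
        calc _ ≤ (α.filter fun x => parity n x = 0).card :=
            Finset.card_le_card Finset.inter_subset_left
          _ = i := hα0
      have heq : (α.filter fun x => parity n x = 0)
          ∩ (A.filter fun x => parity n x = 0)
          = (α.filter fun x => parity n x = 0) :=
        Finset.eq_of_subset_of_card_le Finset.inter_subset_left (by omega)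
      intro x hx
      have hx2 : x ∈ (α.filter fun x => parity n x = 0)
          ∩ (A.filter fun x => parity n x = 0) := by rw [heq]; exact hx
      exact Finset.filter_subset _ _ (Finset.mem_inter.mp hx2).2
    have hi0 : i = 0 := by
      have hemp := hclosed 0 hOsub
      rw [hemp] at hα0
      simpa using hα0.symm
    have hallodd : ∀ x ∈ α, parity n x = 1 := by
      intro x hx
      rcases zmod2_cases (parity n x) with h | h
      · exfalso
        have hx0 : x ∈ α.filter fun y => parity n y = 0 :=
          Finset.mem_filter.mpr ⟨hx, h⟩
        rw [hclosed 0 hOsub] at hx0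
        exact absurd hx0 (Finset.notMem_empty x)
      · exact h
    have hunion : α ∪ A = Finset.univ.filter fun x => parity n x = 1 := by
      apply Finset.eq_of_subset_of_card_le
      · intro x hx
        refine Finset.mem_filter.mpr ⟨Finset.mem_univ _, ?_⟩
        rcases Finset.mem_union.mp hx with h | h
        · exact hallodd x h
        · rw [← parity_add_two n x]
          exact hallodd _ ((hmemA x).mp h)
      · rw [card_odds]
        have hinter : (α ∩ A).card + 1 = n := by
          have hsd := Finset.card_inter_add_card_sdiff α A
          rw [hs1, hαcard] at hsd
          simpa using hsd
        have hie2 := Finset.card_union_add_card_inter α A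
        rw [hαcard, hAcard] at hie2
        omega
    have hb1 : b + 1 = a ∨ b + 1 = c := by
      have hp : parity n (b + 1) = 1 := by
        rw [parity_add', pb, parity_one', zero_add]
      have hmemu : b + 1 ∈ α ∪ A := by
        rw [hunion]; exact Finset.mem_filter.mpr ⟨Finset.mem_univ _, hp⟩
      have hnβ : b + 1 ∉ β := fun h => hβstab b ⟨hdβ, h⟩
      rcases Finset.mem_union.mp hmemu with h | h
      · left; by_contra hne
        exact hnβ ((hmem1 _).mpr (Or.inr ⟨hne, h⟩))
      · right; by_contra hne
        exact hnβ ((hmem2 _).mpr (Or.inr ⟨hne, h⟩))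
    have hb2 : b - 1 = a ∨ b - 1 = c := by
      have hp : parity n (b - 1) = 1 := by
        rw [parity_sub', pb, parity_one']; decide
      have hmemu : b - 1 ∈ α ∪ A := by
        rw [hunion]; exact Finset.mem_filter.mpr ⟨Finset.mem_univ _, hp⟩
      have hnβ : b - 1 ∉ β := fun h =>
        hβstab (b - 1) ⟨h, by simpa using hdβ⟩
      rcases Finset.mem_union.mp hmemu with h | h
      · left; by_contra hne
        exact hnβ ((hmem1 _).mpr (Or.inr ⟨hne, h⟩))
      · right; by_contra hne
        exact hnβ ((hmem2 _).mpr (Or.inr ⟨hne, h⟩))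
    have hne11 : b + 1 ≠ b - 1 := by
      intro h
      have h2 : (2 : ZMod (2 * n + 2)) = 0 := by linear_combination h
      exact two_ne' n (by omega) h2
    rcases hb1 with h1a | h1c
    · have h2c : b - 1 = c := by
        rcases hb2 with h | h
        · exact absurd (h1a.trans h.symm) hne11
        · exact h
      exact ⟨a, b, pa, pb, rep1, Or.inr ⟨c, hs1, hs2,
        Or.inr ⟨by linear_combination h1a, by linear_combination h1a - h2c⟩⟩⟩
    · have h2a : b - 1 = a := by
        rcases hb2 with h | h
        · exact h
        · exact absurd (h1c.trans h.symm) hne11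
      exact ⟨a, b, pa, pb, rep1, Or.inr ⟨c, hs1, hs2,
        Or.inl ⟨by linear_combination h2a, by linear_combination h2a - h1c⟩⟩⟩
  · -- Case (ii) : b ≠ d
    have hbA : b ∈ A := by
      rcases (hmem2 b).mp hbβ with h | ⟨_, h⟩
      · exact absurd h hbd
      · exact h
    have hdα : d ∈ α := by
      rcases (hmem1 d).mp hdβ with h | ⟨_, h⟩
      · exact absurd h.symm hbd
      · exact h
    have hac : a ≠ c := by
      intro h
      have huneq : α ∪ A = insert a β := by
        ext x
        simp only [Finset.mem_union, Finset.mem_insert]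
        constructor
        · rintro (hx | hx)
          · by_cases hxa : x = a
            · exact Or.inl hxa
            · exact Or.inr ((hmem1 x).mpr (Or.inr ⟨hxa, hx⟩))
          · by_cases hxc : x = c
            · exact Or.inl (by rw [hxc, ← h])
            · exact Or.inr ((hmem2 x).mpr (Or.inr ⟨hxc, hx⟩))
        · rintro (rfl | hx)
          · exact Or.inl haα
          · rcases (hmem1 x).mp hx with rfl | ⟨_, hxα⟩
            · exact Or.inr hbA
            · exact Or.inl hxα
      have hcount : ((α ∪ A).filter fun x => parity n x = 1).card = n - i := by
        rw [huneq, Finset.filter_insert, if_pos pa,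
          Finset.card_insert_of_notMem
            (fun h' => haβ (Finset.mem_filter.mp h').1), hβ1]
        omega
      have hie := Finset.card_union_add_card_inter
        (α.filter fun x => parity n x = 1) (A.filter fun x => parity n x = 1)
      rw [← Finset.filter_union, hcount, hα1, hA1] at hie
      have heq : (α.filter fun x => parity n x = 1)
          ∩ (A.filter fun x => parity n x = 1)
          = (α.filter fun x => parity n x = 1) :=
        Finset.eq_of_subset_of_card_le Finset.inter_subset_left (by omega)
      have hOsub : (α.filter fun x => parity n x = 1) ⊆ A := by
        intro x hx
        have hx2 : x ∈ (α.filter fun x => parity n x = 1)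
            ∩ (A.filter fun x => parity n x = 1) := by rw [heq]; exact hx
        exact Finset.filter_subset _ _ (Finset.mem_inter.mp hx2).2
      have hemp := hclosed 1 hOsub
      rw [hemp] at hα1
      simp at hα1
      omega
    have haA : a ∉ A := fun h => hac (haA_eq h)
    have hcα : c ∉ α := fun h => hac ((hcα_eq h).symm)
    have hs1 : α \ A = {a, d} := by
      ext x
      simp only [Finset.mem_sdiff, Finset.mem_insert, Finset.mem_singleton]
      constructor
      · rintro ⟨hxα, hxA⟩
        by_cases hxa : x = a
        · exact Or.inl hxa
        · have hxβ : x ∈ β := (hmem1 x).mpr (Or.inr ⟨hxa, hxα⟩)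
          rcases (hmem2 x).mp hxβ with h | ⟨_, h⟩
          · exact Or.inr h
          · exact absurd h hxA
      · rintro (rfl | rfl)
        · exact ⟨haα, haA⟩
        · exact ⟨hdα, hdA⟩
    have hs2 : A \ α = {c, b} := by
      ext x
      simp only [Finset.mem_sdiff, Finset.mem_insert, Finset.mem_singleton]
      constructor
      · rintro ⟨hxA, hxα⟩
        by_cases hxc : x = c
        · exact Or.inl hxc
        · have hxβ : x ∈ β := (hmem2 x).mpr (Or.inr ⟨hxc, hxA⟩)
          rcases (hmem1 x).mp hxβ with h | ⟨_, h⟩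
          · exact Or.inr h
          · exact absurd h hxα
      · rintro (rfl | rfl)
        · exact ⟨hcA, hcα⟩
        · exact ⟨hbA, hbα⟩
    exact ⟨a, b, pa, pb, rep1, Or.inl ⟨c, d, pc, pd, hs1, hs2⟩⟩

lemma key_uniq (n i : ℕ) (hn : 2 ≤ n) (hi : i ≤ n - 1)
    (α β γ : Finset (ZMod (2 * n + 2)))
    (hα : α ∈ Pset n i) (hβ : β ∈ Pset n (i + 1)) (hγ : γ ∈ Pset n (i + 1))
    (h1 : (α ∩ β).card = n - 1) (h2 : ((ominus n α 2) ∩ β).card = n - 1)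
    (h3 : (α ∩ γ).card = n - 1) (h4 : ((ominus n α 2) ∩ γ).card = n - 1) :
    β = γ := by
  obtain ⟨a, b, pa, pb, rep, hc⟩ := shape n i hn hi α β hα hβ h1 h2
  obtain ⟨a', b', pa', pb', rep', hc'⟩ := shape n i hn hi α γ hα hγ h3 h4
  rcases hc with ⟨c, d, pc, pd, s1, s2⟩ | ⟨c, s1, s2, hbc⟩
  · rcases hc' with ⟨c', d', pc', pd', s1', s2'⟩ | ⟨c', s1', s2', hbc'⟩
    · have ha' : a' ∈ ({a, d} : Finset (ZMod (2 * n + 2))) := by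
        rw [← s1, s1']
        exact Finset.mem_insert_self _ _
      have haa : a' = a := by
        rcases Finset.mem_insert.mp ha' with h | h
        · exact h
        · rw [Finset.mem_singleton.mp h] at pa'
          rw [pd] at pa'
          exact absurd pa' (by decide)
      have hb' : b' ∈ ({c, b} : Finset (ZMod (2 * n + 2))) := by
        rw [← s2, s2']
        exact Finset.mem_insert.mpr (Or.inr (Finset.mem_singleton_self _))
      have hbb : b' = b := by
        rcases Finset.mem_insert.mp hb' with h | h
        · rw [h] at pb'
          rw [pc] at pb'
          exact absurd pb' (by decide)
        · exact Finset.mem_singleton.mp h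
      rw [rep, rep', haa, hbb]
    · exfalso
      have hda : d ∈ ({a'} : Finset (ZMod (2 * n + 2))) := by
        rw [← s1', s1]
        exact Finset.mem_insert.mpr (Or.inr (Finset.mem_singleton_self _))
      have haa : a ∈ ({a'} : Finset (ZMod (2 * n + 2))) := by
        rw [← s1', s1]
        exact Finset.mem_insert_self _ _
      have : parity n a' = 0 := by
        rw [← Finset.mem_singleton.mp hda]; exact pd
      rw [pa'] at this
      exact absurd this (by decide)
  · rcases hc' with ⟨c', d', pc', pd', s1', s2'⟩ | ⟨c', s1', s2', hbc'⟩
    · exfalso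
      have hda : d' ∈ ({a} : Finset (ZMod (2 * n + 2))) := by
        rw [← s1, s1']
        exact Finset.mem_insert.mpr (Or.inr (Finset.mem_singleton_self _))
      have : parity n a = 0 := by
        rw [← Finset.mem_singleton.mp hda]; exact pd'
      rw [pa] at this
      exact absurd this (by decide)
    · have haa : a' = a := by
        have h' : a' ∈ ({a} : Finset (ZMod (2 * n + 2))) := by
          rw [← s1, s1']; exact Finset.mem_singleton_self _
        exact Finset.mem_singleton.mp h'
      have hcc : c' = c := by
        have h' : c' ∈ ({c} : Finset (ZMod (2 * n + 2))) := by
          rw [← s2, s2']; exact Finset.mem_singleton_self _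
        exact Finset.mem_singleton.mp h'
      rw [haa] at hbc'
      rw [hcc] at hbc'
      rcases hbc with ⟨hb1, hc1⟩ | ⟨hb1, hc1⟩ <;>
        rcases hbc' with ⟨hb2, hc2⟩ | ⟨hb2, hc2⟩
      · rw [rep, rep', haa, hb1, hb2]
      · exfalso
        have h4z : (4 : ZMod (2 * n + 2)) = 0 := by linear_combination hc2 - hc1
        exact four_ne' n hn h4z
      · exfalso
        have h4z : (4 : ZMod (2 * n + 2)) = 0 := by linear_combination hc1 - hc2
        exact four_ne' n hn h4z
      · rw [rep, rep', haa, hb1, hb2]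

/-- If `α ∈ P_i`, and `β, γ ∈ P_{i+1}` satisfy
`|α ∩ β| = |(α ⊖ 2) ∩ β| = n - 1` and `|(α ⊖ 2) ∩ γ| = |(α ⊖ 4) ∩ γ| = n - 1`,
then `γ = β ⊖ 2`. -/
theorem neighbors_cycle (n i : ℕ) (hn : 2 ≤ n) (hi : i ≤ n - 1)
    (α β γ : Finset (ZMod (2 * n + 2)))
    (hα : α ∈ Pset n i) (hβ : β ∈ Pset n (i + 1)) (hγ : γ ∈ Pset n (i + 1))
    (h1 : (α ∩ β).card = n - 1)
    (h2 : ((ominus n α 2) ∩ β).card = n - 1)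
    (h3 : ((ominus n α 2) ∩ γ).card = n - 1)
    (h4 : ((ominus n α 4) ∩ γ).card = n - 1) :
    γ = ominus n β 2 := by
  have hα2 : ominus n α 2 ∈ Pset n i := ominus_two_mem_Pset n i α hα
  have hβ2 : ominus n β 2 ∈ Pset n (i + 1) := ominus_two_mem_Pset n (i + 1) β hβ
  have h4' : ((ominus n (ominus n α 2) 2) ∩ γ).card = n - 1 := by
    rw [ominus_ominus']; exact h4
  have e1 : ((ominus n α 2) ∩ (ominus n β 2)).card = n - 1 := by
    rw [← ominus_inter', ominus_card']; exact h1
  have e2 : ((ominus n (ominus n α 2) 2) ∩ (ominus n β 2)).card = n - 1 := by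
    rw [← ominus_inter', ominus_card']; exact h2
  exact key_uniq n i hn hi (ominus n α 2) γ (ominus n β 2) hα2 hγ hβ2 h3 h4' e1 e2
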